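/- Let φ : ℂ² → ℝ be continuous on the closed unit ball B̄ = {z : ‖z‖ ≤ 1}, and suppose there exist a constant c > 0 and a function ε with φ(z) = Q(z) + ε(z), where Q(z) ≥ c‖z‖² for all z and ε(z)/‖z‖² → 0 as z → 0. Then there exist λ > 0 and radii 0 < r < r' < 1 such that the function ρ(z) = λ(1 + ‖z‖²) satisfies ρ(z) > φ(z) for every z with ‖z‖ ≤ r, and ρ(z) < φ(z) for every z with ‖z‖ = r'. -/
import Mathlib


open Asymptotics Filter Topology

/-- `C2` is the two-dimensional complex Euclidean space ℂ² with its standard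
Hermitian norm. -/
abbrev C2 := EuclideanSpace ℂ (Fin 2)

/-- If `φ : ℂ² → ℝ` is continuous on the closed unit ball and has a minimum of
Morse type at the origin, i.e. `φ = Q + ε` with `Q` a quadratic form satisfying
`Q z ≥ c‖z‖²` for some `c > 0` and `ε(z) = o(‖z‖²)` as `z → 0`, then there
exist `λ > 0` and radii `0 < r < r' < 1` such that `ρ(z) = λ(1 + ‖z‖²)` is
greater than `φ` on the closed ball of radius `r` and smaller than `φ` on the
sphere of radius `r'`. -/
theorem exists_comparison_potential (φ Q ε : C2 → ℝ)
    (hφ : ContinuousOn φ (Metric.closedBall (0 : C2) 1))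
    (b : C2 →ₗ[ℝ] C2 →ₗ[ℝ] ℝ) (hb : ∀ x y, b x y = b y x)
    (hQ : ∀ z, Q z = b z z)
    (c : ℝ) (hc : 0 < c) (hQlb : ∀ z : C2, c * ‖z‖ ^ 2 ≤ Q z)
    (hφeq : ∀ z : C2, φ z = Q z + ε z)
    (hε : (fun z : C2 => ε z) =o[𝓝 (0 : C2)] fun z : C2 => ‖z‖ ^ 2) :
    ∃ lam > (0 : ℝ), ∃ r r' : ℝ, 0 < r ∧ r < r' ∧ r' < 1 ∧
      (∀ z : C2, ‖z‖ ≤ r → φ z < lam * (1 + ‖z‖ ^ 2)) ∧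
      (∀ z : C2, ‖z‖ = r' → lam * (1 + ‖z‖ ^ 2) < φ z) := by
  obtain ⟨δ, hδ0, hδ⟩ : ∃ δ > 0, ∀ z : C2, ‖z‖ < δ → |ε z| ≤ c / 2 * ‖z‖ ^ 2 := by
    have h := hε.def (by positivity : (0 : ℝ) < c / 2)
    rw [Metric.eventually_nhds_iff] at h
    obtain ⟨δ, hδ0, h⟩ := h
    refine ⟨δ, hδ0, fun z hz => ?_⟩
    have := h (show dist z 0 < δ by simpa using hz)
    simpa [abs_of_nonneg (by positivity : (0 : ℝ) ≤ ‖z‖ ^ 2)] using this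
  have hε0 : ε 0 = 0 := by
    have := hδ 0 (by simpa using hδ0)
    simp at this
    linarith [abs_nonneg (ε 0), le_abs_self (ε 0), neg_abs_le (ε 0)]
  have hφ0 : φ 0 = 0 := by
    rw [hφeq, hQ, map_zero, hε0]; simp
  set r' : ℝ := min (δ / 2) (1 / 2) with hr'def
  have hr'0 : 0 < r' := lt_min (by linarith) (by norm_num)
  have hr'δ : r' < δ := lt_of_le_of_lt (min_le_left _ _) (by linarith)
  have hr'half : r' ≤ 1 / 2 := min_le_right _ _
  set lam : ℝ := c * r' ^ 2 / 8 with hlamdef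
  have hlam0 : 0 < lam := by positivity
  have hcont : ContinuousAt φ 0 :=
    hφ.continuousAt (Metric.closedBall_mem_nhds 0 one_pos)
  have h2 : ∀ᶠ z in 𝓝 (0 : C2), φ z < lam := by
    have ht : Filter.Tendsto φ (𝓝 (0 : C2)) (𝓝 (0 : ℝ)) := by
      rw [← hφ0]; exact hcont
    exact ht.eventually (Filter.Tendsto.eventually_lt_const hlam0 tendsto_id)
  rw [Metric.eventually_nhds_iff] at h2
  obtain ⟨r₁, hr₁0, hr₁⟩ := h2
  refine ⟨lam, hlam0, min (r₁ / 2) (r' / 2), r', lt_min (by linarith) (by linarith),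
    lt_of_le_of_lt (min_le_right _ _) (by linarith), by linarith, ?_, ?_⟩
  · intro z hz
    have h1 : φ z < lam := by
      apply hr₁
      simp only [dist_zero_right]
      exact lt_of_le_of_lt (hz.trans (min_le_left _ _)) (by linarith)
    nlinarith [norm_nonneg z, sq_nonneg ‖z‖]
  · intro z hz
    have hzδ : ‖z‖ < δ := by rw [hz]; exact hr'δ
    have hb1 := hδ z hzδ
    have hb2 := hQlb z
    have hb3 := hφeq z
    have hb4 := neg_abs_le (ε z)
    rw [hz] at hb1 hb2 ⊢
    have hr'sq : r' ^ 2 ≤ 1 / 4 := by nlinarith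
    have hcr : 0 < c * r' ^ 2 := by positivity
    nlinarith [hcr, hr'sq]
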